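/- Every transitive permutation group of degree p², where p is a prime, is pre-primitive. -/

import Mathlib

open Equiv

variable {Ω : Type*}

/-- `G` is a transitive permutation group on `Ω`. -/
def IsTransitive (G : Subgroup (Perm Ω)) : Prop :=
  ∀ x y : Ω, ∃ g ∈ G, g x = y

/-- The partition (setoid) `r` of `Ω` is `G`-invariant. -/
def IsInvariantPartition (G : Subgroup (Perm Ω)) (r : Setoid Ω) : Prop :=
  ∀ g ∈ G, ∀ x y : Ω, r.r x y → r.r (g x) (g y)

/-- The partition `r` of `Ω` is the orbit partition of the permutation group `H`. -/
def IsOrbitPartition (H : Subgroup (Perm Ω)) (r : Setoid Ω) : Prop :=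
  ∀ x y : Ω, r.r x y ↔ ∃ h ∈ H, h x = y

/-- `G` is pre-primitive: every `G`-invariant partition is the orbit partition
of a subgroup of `G`. -/
def IsPrePrimitive (G : Subgroup (Perm Ω)) : Prop :=
  ∀ r : Setoid Ω, IsInvariantPartition G r → ∃ H ≤ G, IsOrbitPartition H r

/-- `N` is a normal subgroup of the permutation group `G`. -/
def IsNormalIn (N G : Subgroup (Perm Ω)) : Prop :=
  N ≤ G ∧ ∀ g ∈ G, ∀ n ∈ N, g * n * g⁻¹ ∈ N


open scoped Classical in
lemma setoid_card_eq [Fintype Ω] (r : Setoid Ω) (c : ℕ)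
    (h : ∀ x : Ω, Set.ncard {z | r.r x z} = c) :
    Fintype.card Ω = Nat.card (Quotient r) * c := by
  have e : (Σ q : Quotient r, {x : Ω // Quotient.mk r x = q}) ≃ Ω :=
    Equiv.sigmaFiberEquiv _
  rw [← Fintype.card_congr e, Fintype.card_sigma, Nat.card_eq_fintype_card]
  have hfib : ∀ q : Quotient r, Fintype.card {x : Ω // Quotient.mk r x = q} = c := by
    intro q
    induction q using Quotient.ind with
    | _ x₀ =>
      have e2 : {x : Ω // Quotient.mk r x = Quotient.mk r x₀} ≃ {z : Ω // r.r x₀ z} :=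
        Equiv.subtypeEquivRight (fun z => by
          rw [Quotient.eq]
          exact ⟨fun h' => r.symm h', fun h' => r.symm h'⟩)
      rw [Fintype.card_congr e2, ← Nat.card_eq_fintype_card]
      exact (Nat.card_coe_set_eq {z : Ω | r.r x₀ z}).trans (h x₀)
  simp [hfib]

lemma class_image (G : Subgroup (Perm Ω)) (r : Setoid Ω) (hinv : IsInvariantPartition G r)
    {g : Perm Ω} (hg : g ∈ G) (x : Ω) :
    g '' {z | r.r x z} = {z | r.r (g x) z} := by
  ext z
  constructor
  · rintro ⟨w, hw, rfl⟩; exact hinv g hg x w hw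
  · intro hz
    refine ⟨g⁻¹ z, ?_, by simp⟩
    have := hinv g⁻¹ (inv_mem hg) (g x) z hz
    simpa using this

lemma class_ncard_eq (G : Subgroup (Perm Ω)) (r : Setoid Ω) (hinv : IsInvariantPartition G r)
    (hG : IsTransitive G) (x y : Ω) :
    Set.ncard {z | r.r x z} = Set.ncard {z | r.r y z} := by
  obtain ⟨g, hg, rfl⟩ := hG x y
  rw [← class_image G r hinv hg x, Set.ncard_image_of_injective _ g.injective]


theorem transitive_degree_prime_squared_preprimitive
    {Ω : Type*} [Fintype Ω] (p : ℕ) (hp : p.Prime)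
    (hcard : Fintype.card Ω = p ^ 2)
    (G : Subgroup (Perm Ω)) (hG : IsTransitive G) :
    IsPrePrimitive G := by
  classical
  intro r hinv
  have hpos : 0 < Fintype.card Ω := by rw [hcard]; exact pow_pos hp.pos 2
  obtain ⟨x₀⟩ := Fintype.card_pos_iff.mp hpos
  obtain ⟨c, hall⟩ : ∃ c, ∀ x : Ω, Set.ncard {z | r.r x z} = c :=
    ⟨_, fun x => class_ncard_eq G r hinv hG x x₀⟩
  have hQ : Fintype.card Ω = Nat.card (Quotient r) * c := setoid_card_eq r c hall
  have hcdvd : c ∣ p ^ 2 := ⟨Nat.card (Quotient r), by rw [← hcard, hQ, mul_comm]⟩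
  obtain ⟨i, hi2, rfl⟩ := (Nat.dvd_prime_pow hp).mp hcdvd
  interval_cases i
  · -- c = 1 : trivial partition, take ⊥
    refine ⟨⊥, bot_le, fun x y => ?_⟩
    constructor
    · intro hxy
      obtain ⟨a, ha⟩ := Set.ncard_eq_one.mp (hall x)
      have hx : x ∈ {z | r.r x z} := r.refl x
      have hy : y ∈ {z | r.r x z} := hxy
      rw [ha] at hx hy
      refine ⟨1, Subgroup.mem_bot.mpr rfl, ?_⟩
      simp [hx.trans hy.symm]
    · rintro ⟨h, hh, rfl⟩
      rw [Subgroup.mem_bot] at hh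
      subst hh
      simpa using r.refl x
  · -- c = p : main case
    simp only [pow_one] at hall hQ
    -- the kernel of the action on classes
    set K : Subgroup (Perm Ω) :=
      { carrier := {g : Perm Ω | g ∈ G ∧ ∀ x, r.r (g x) x}
        mul_mem' := by
          rintro a b ⟨haG, ha⟩ ⟨hbG, hb⟩
          refine ⟨mul_mem haG hbG, fun x => ?_⟩
          have h1 : r.r (a (b x)) (b x) := ha (b x)
          have h2 : r.r (b x) x := hb x
          simpa [Perm.mul_apply] using r.iseqv.trans h1 h2
        one_mem' := ⟨one_mem G, fun x => by simpa using r.refl x⟩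
        inv_mem' := by
          rintro a ⟨haG, ha⟩
          refine ⟨inv_mem haG, fun x => ?_⟩
          have h0 := ha (a⁻¹ x)
          rw [show a (a⁻¹ x) = x from a.apply_symm_apply x] at h0
          exact r.iseqv.symm h0 } with hK
    have hKG : K ≤ G := fun g hg => hg.1
    have hKmem : ∀ {g : Perm Ω}, g ∈ K ↔ g ∈ G ∧ ∀ x, r.r (g x) x := Iff.rfl
    -- the orbit setoid of K
    set s : Setoid Ω :=
      { r := fun x y => ∃ k ∈ K, k x = y
        iseqv := by
          refine ⟨fun x => ⟨1, one_mem K, rfl⟩, ?_, ?_⟩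
          · rintro x y ⟨k, hk, rfl⟩
            exact ⟨k⁻¹, inv_mem hk, by simp⟩
          · rintro x y z ⟨k, hk, rfl⟩ ⟨k', hk', rfl⟩
            exact ⟨k' * k, mul_mem hk' hk, by simp [Perm.mul_apply]⟩ } with hs
    have hsinv : IsInvariantPartition G s := by
      rintro g hg x y ⟨k, hk, rfl⟩
      refine ⟨g * k * g⁻¹, ?_, by simp [Perm.mul_apply]⟩
      refine hKmem.mpr ⟨mul_mem (mul_mem hg (hKG hk)) (inv_mem hg), fun z => ?_⟩
      have := hinv g hg (k (g⁻¹ z)) (g⁻¹ z) ((hKmem.mp hk).2 (g⁻¹ z))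
      simpa [Perm.mul_apply] using this
    set d := Set.ncard {z | s.r x₀ z} with hd
    have halls : ∀ x : Ω, Set.ncard {z | s.r x z} = d :=
      fun x => class_ncard_eq G s hsinv hG x x₀
    -- each s-class is contained in the corresponding r-class
    have hsub : ∀ x : Ω, {z | s.r x z} ⊆ {z | r.r x z} := by
      rintro x z ⟨k, hk, rfl⟩
      exact r.symm ((hKmem.mp hk).2 x)
    -- d divides p
    have hddvd : d ∣ p := by
      set C := {z : Ω | r.r x₀ z} with hC
      set t : Setoid C := Setoid.comap Subtype.val s with ht
      have hallt : ∀ a : C, Set.ncard {b : C | t.r a b} = d := by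
        intro a
        have haC : r.r x₀ (a : Ω) := a.2
        have himg : Subtype.val '' {b : C | t.r a b} = {z : Ω | s.r (a : Ω) z} := by
          ext z
          constructor
          · rintro ⟨b, hb, rfl⟩; exact hb
          · intro hz
            have hzC : z ∈ C := r.iseqv.trans haC ((hsub (a : Ω)) hz)
            exact ⟨⟨z, hzC⟩, hz, rfl⟩
        calc Set.ncard {b : C | t.r a b}
            = Set.ncard (Subtype.val '' {b : C | t.r a b}) :=
              (Set.ncard_image_of_injective _ Subtype.val_injective).symm
          _ = Set.ncard {z : Ω | s.r (a : Ω) z} := by rw [himg]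
          _ = d := halls _
      have hcC : Fintype.card C = Nat.card (Quotient t) * d := setoid_card_eq t d hallt
      have hCp : Fintype.card C = p := by
        have h := hall x₀
        rw [← Nat.card_coe_set_eq, Nat.card_eq_fintype_card] at h
        exact h
      exact ⟨Nat.card (Quotient t), by rw [← hCp, hcC, mul_comm]⟩
    rcases (Nat.Prime.eq_one_or_self_of_dvd hp d hddvd) with hd1 | hdp
    · -- d = 1 : K is trivial, contradiction via action on quotient
      exfalso
      have hKtriv : ∀ k ∈ K, k = 1 := by
        intro k hk
        ext x
        have hx : x ∈ {z | s.r x z} := s.refl x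
        have hkx : k x ∈ {z | s.r x z} := ⟨k, hk, rfl⟩
        obtain ⟨a, ha⟩ := Set.ncard_eq_one.mp ((halls x).trans hd1)
        rw [ha] at hx hkx
        simpa using hkx.trans hx.symm
      -- the action of G on the quotient
      have hmap : ∀ g : G, ∀ a b : Ω, r.r a b → r.r ((g : Perm Ω) a) ((g : Perm Ω) b) :=
        fun g => hinv g g.2
      let φf : G → Perm (Quotient r) := fun g =>
        { toFun := Quotient.map (g : Perm Ω) (hmap g)
          invFun := Quotient.map ((g⁻¹ : G) : Perm Ω) (hmap g⁻¹)
          left_inv := by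
            intro q; induction q using Quotient.ind with
            | _ x => simp [Quotient.map_mk]
          right_inv := by
            intro q; induction q using Quotient.ind with
            | _ x => simp [Quotient.map_mk] }
      let φ : G →* Perm (Quotient r) :=
        { toFun := φf
          map_one' := by
            ext q; induction q using Quotient.ind with
            | _ x => simp [φf, Quotient.map_mk]; rfl
          map_mul' := by
            intro a b
            ext q; induction q using Quotient.ind with
            | _ x => simp [φf, Quotient.map_mk, Perm.mul_apply]; rfl }
      have hφinj : Function.Injective φ := by
        rw [injective_iff_map_eq_one]
        intro g hg
        have hgK : (g : Perm Ω) ∈ K := by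
          refine hKmem.mpr ⟨g.2, fun x => ?_⟩
          have : φf g (Quotient.mk r x) = Quotient.mk r x := by
            rw [show φf g = 1 from hg]; rfl
          have : Quotient.mk r ((g : Perm Ω) x) = Quotient.mk r x := this
          exact Quotient.eq.mp this
        have := hKtriv _ hgK
        exact Subtype.ext this
      -- p^2 divides |G|
      have horb : MulAction.orbit G x₀ = Set.univ := by
        ext y
        simp only [Set.mem_univ, iff_true, MulAction.mem_orbit_iff]
        obtain ⟨g, hg, hgx⟩ := hG x₀ y
        exact ⟨⟨g, hg⟩, hgx⟩
      have hdvd1 : p ^ 2 ∣ Nat.card G := by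
        have h1 : (MulAction.stabilizer G x₀).index = p ^ 2 := by
          rw [MulAction.index_stabilizer, horb, Set.ncard_univ, Nat.card_eq_fintype_card, hcard]
        have h2 := Subgroup.index_dvd_card (MulAction.stabilizer G x₀)
        rwa [h1] at h2
      -- |G| divides p!
      have hQp : Nat.card (Quotient r) = p := by
        have h' : Nat.card (Quotient r) * p = p * p := by
          rw [← hQ, hcard, pow_two]
        exact Nat.eq_of_mul_eq_mul_right hp.pos h'
      have hdvd2 : Nat.card G ∣ Nat.factorial p := by
        have h1 : Nat.card G = Nat.card φ.range :=
          (Nat.card_congr (Equiv.ofInjective φ hφinj)).trans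
            (by rw [← MonoidHom.coe_range]; rfl)
        have h2 := Subgroup.card_subgroup_dvd_card φ.range
        have h3 : Nat.card (Perm (Quotient r)) = Nat.factorial p := by
          rw [Nat.card_eq_fintype_card, Fintype.card_perm, ← Nat.card_eq_fintype_card, hQp]
        rw [h3] at h2
        rwa [h1]
      have : p ^ 2 ∣ Nat.factorial p := hdvd1.trans hdvd2
      rw [pow_two] at this
      have hfac : Nat.factorial p = p * Nat.factorial (p - 1) := by
        conv_lhs => rw [show p = (p - 1) + 1 from (Nat.succ_pred_eq_of_pos hp.pos).symm]
        rw [Nat.factorial_succ, Nat.sub_add_cancel hp.one_lt.le]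
      rw [hfac] at this
      have hpd : p ∣ Nat.factorial (p - 1) := (mul_dvd_mul_iff_left hp.pos.ne').mp this
      have hle := (Nat.Prime.dvd_factorial hp).mp hpd
      have := hp.two_le
      omega
    · -- d = p : orbits of K are the classes
      refine ⟨K, hKG, fun x y => ?_⟩
      constructor
      · intro hxy
        have heq : {z | s.r x z} = {z | r.r x z} :=
          Set.eq_of_subset_of_ncard_le (hsub x)
            (by rw [hall x, halls x, hdp]) (Set.toFinite _)
        have : y ∈ {z | s.r x z} := heq ▸ hxy
        exact this
      · rintro ⟨k, hk, rfl⟩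
        exact r.symm ((hKmem.mp hk).2 x)
  · -- c = p^2 : full partition, take G
    refine ⟨G, le_rfl, fun x y => ⟨fun _ => hG x y, fun _ => ?_⟩⟩
    have heq : {z | r.r x z} = Set.univ :=
      Set.eq_of_subset_of_ncard_le (Set.subset_univ _)
        (by rw [Set.ncard_univ, Nat.card_eq_fintype_card, hcard, hall x]) (Set.toFinite _)
    have : y ∈ {z | r.r x z} := by rw [heq]; trivial
    exact this
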